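/- Let (V, ≤) be a finite partial order such that for every v ∈ V the set {u ∈ V : v ≤ u} is a chain (this models ancestry in a rooted forest: the ancestors of any node are totally ordered). Let w ∈ V be a minimal element (modeling a leaf edge of the tree), and let 𝒫 be a finite nonempty family of pairs (b, a) ∈ V × V with b ≤ w ≤ a, where a pair (b, a) covers x ∈ V if b ≤ x ≤ a. Then there exists a single pair (b₀, a₀) ∈ 𝒫 that covers every element of V covered by some pair of 𝒫. (This is the 1-SNC property of leaf edges in the tree cover problem.) -/

import Mathlib

/-- Tree cover, 1-SNC property of leaf edges: in a finite partial order where the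
set of upper bounds of every element is a chain (ancestry in a rooted forest), if
`w` is minimal (a leaf edge) and `P` is a finite nonempty family of pairs
`(b, a)` with `b ≤ w ≤ a` (intervals covering `w`), then a single pair of `P`
covers every element covered by some pair of `P`. -/
theorem tree_cover_leaf_one_SNC {V : Type*} [Fintype V] [PartialOrder V]
    (hchain : ∀ v : V, IsChain (· ≤ ·) {u : V | v ≤ u})
    (w : V) (hmin : IsMin w)
    (P : Finset (V × V)) (hne : P.Nonempty)
    (hcov : ∀ p ∈ P, p.1 ≤ w ∧ w ≤ p.2) :
    ∃ p ∈ P, ∀ x : V, (∃ q ∈ P, q.1 ≤ x ∧ x ≤ q.2) → p.1 ≤ x ∧ x ≤ p.2 := by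
  obtain ⟨p, hp, hmax⟩ := P.exists_maximal hne
  refine ⟨p, hp, ?_⟩
  rintro x ⟨q, hq, hqx, hxq⟩
  have hqw : q.1 = w := le_antisymm (hcov q hq).1 (hmin (hcov q hq).1)
  have hwx : w ≤ x := hqw ▸ hqx
  refine ⟨(hcov p hp).1.trans hwx, ?_⟩
  have hcmp := hchain w (hcov q hq).2 (hcov p hp).2
  by_cases h : q.2 = p.2
  · exact h ▸ hxq
  · rcases hcmp h with h1 | h2
    · exact hxq.trans h1
    · -- p.2 ≤ q.2 but p maximal in P (Prod order). Compare pairs.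
      have hq1 : p.1 ≤ q.1 := hqw ▸ (hcov p hp).1
      have : ¬ p < q := fun hlt => lt_irrefl _ (lt_of_lt_of_le hlt (hmax hq hlt.le))
      have hple : p ≤ q := Prod.mk_le_mk.mpr ⟨hq1, h2⟩
      have : p = q := by
        by_contra hne'
        exact this (lt_of_le_of_ne hple hne')
      rw [this]; exact hxq
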